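/- Let (M', W') and (M, W) be categories each equipped with a class of weak equivalences closed under composition and containing identities, and let t : M' → M be a left approximation functor. Then the induced functor ho t : M'[W'⁻¹] → M[W⁻¹] between homotopy categories is an equivalence of categories. -/

import Mathlib

open CategoryTheory

universe v₁ u₁ v₂ u₂

namespace ApproxProof

open CategoryTheory.Category CategoryTheory.Localization

variable {M' : Type u₁} [Category.{v₁} M'] {M : Type u₂} [Category.{v₂} M]

/-- Bundled hypotheses of the approximation theorem. -/
structure Hyp (W' : MorphismProperty M') (W : MorphismProperty M) (t : M' ⥤ M) : Prop where
  hW'id : ∀ X : M', W' (𝟙 X)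
  hWid : ∀ X : M, W (𝟙 X)
  hWcomp : ∀ {X Y Z : M} (f : X ⟶ Y) (g : Y ⟶ Z), W f → W g → W (f ≫ g)
  ht : ∀ {X Y : M'} (f : X ⟶ Y), W' f → W (t.map f)
  lap1 : ∀ A : M, ∃ (A' : M') (p : t.obj A' ⟶ A), W p
  lap2a : ∀ {A' B' : M'} {B : M} (f : t.obj A' ⟶ B) (p : t.obj B' ⟶ B), W p →
      ∃ (D' : M') (i' : A' ⟶ D') (j' : B' ⟶ D') (σ : t.obj D' ⟶ B),
        W' j' ∧ W σ ∧ t.map i' ≫ σ = f ∧ t.map j' ≫ σ = p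
  lap2b : ∀ {A' B' D₁ D₂ : M'} {B : M} (f : t.obj A' ⟶ B) (p : t.obj B' ⟶ B)
      (i₁ : A' ⟶ D₁) (j₁ : B' ⟶ D₁) (σ₁ : t.obj D₁ ⟶ B)
      (i₂ : A' ⟶ D₂) (j₂ : B' ⟶ D₂) (σ₂ : t.obj D₂ ⟶ B),
      W p →
      ∀ (hj₁ : W' j₁), W σ₁ → t.map i₁ ≫ σ₁ = f → t.map j₁ ≫ σ₁ = p →
      ∀ (hj₂ : W' j₂), W σ₂ → t.map i₂ ≫ σ₂ = f → t.map j₂ ≫ σ₂ = p →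
      W'.Q.map i₁ ≫ (Localization.isoOfHom W'.Q W' j₁ hj₁).inv =
        W'.Q.map i₂ ≫ (Localization.isoOfHom W'.Q W' j₂ hj₂).inv

variable {W' : MorphismProperty M'} {W : MorphismProperty M} {t : M' ⥤ M}
variable (h : Hyp W' W t)

/-- The fraction `j'⁻¹ ∘ i'` associated to `f : tA' ⟶ B` and a weak equivalence
`p : tB' ⟶ B`. -/
noncomputable def phi {A' B' : M'} {B : M} (f : t.obj A' ⟶ B) (p : t.obj B' ⟶ B)
    (hp : W p) : W'.Q.obj A' ⟶ W'.Q.obj B' :=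
  W'.Q.map (h.lap2a f p hp).choose_spec.choose ≫
    (Localization.isoOfHom W'.Q W' (h.lap2a f p hp).choose_spec.choose_spec.choose
      (h.lap2a f p hp).choose_spec.choose_spec.choose_spec.choose_spec.1).inv

lemma phi_eq {A' B' D : M'} {B : M} (f : t.obj A' ⟶ B) (p : t.obj B' ⟶ B) (hp : W p)
    (i : A' ⟶ D) (j : B' ⟶ D) (σ : t.obj D ⟶ B) (hj : W' j) (hσ : W σ)
    (h1 : t.map i ≫ σ = f) (h2 : t.map j ≫ σ = p) :
    phi h f p hp = W'.Q.map i ≫ (Localization.isoOfHom W'.Q W' j hj).inv := by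
  obtain ⟨hj₀, hσ₀, h1₀, h2₀⟩ :=
    (h.lap2a f p hp).choose_spec.choose_spec.choose_spec.choose_spec
  exact h.lap2b f p _ _ _ i j σ hp hj₀ hσ₀ h1₀ h2₀ hj hσ h1 h2

lemma phi_self {A' : M'} {B : M} (f : t.obj A' ⟶ B) (p : t.obj A' ⟶ B) (hp : W p)
    (hfp : f = p) : phi h f p hp = 𝟙 _ := by
  subst hfp
  rw [phi_eq h f f hp (𝟙 A') (𝟙 A') f (h.hW'id A') hp (by simp) (by simp)]
  simp

lemma phi_Qmap {A' B' : M'} {B : M} (g : A' ⟶ B') (f : t.obj A' ⟶ B) (p : t.obj B' ⟶ B)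
    (hp : W p) (hf : f = t.map g ≫ p) : phi h f p hp = W'.Q.map g := by
  rw [phi_eq h f p hp g (𝟙 B') p (h.hW'id B') hp (by simpa using hf.symm) (by simp)]
  simp

lemma phi_comp {A' B' C' : M'} {B C : M} (f : t.obj A' ⟶ B) (p : t.obj B' ⟶ B) (hp : W p)
    (g : B ⟶ C) (g' : t.obj B' ⟶ C) (f' : t.obj A' ⟶ C) (q : t.obj C' ⟶ C) (hq : W q)
    (hg' : g' = p ≫ g) (hf' : f' = f ≫ g) :
    phi h f p hp ≫ phi h g' q hq = phi h f' q hq := by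
  subst hg' hf'
  obtain ⟨D₁, i₁, j₁, σ₁, hj₁, hσ₁, e₁, e₂⟩ := h.lap2a f p hp
  obtain ⟨D₂, i₂, j₂, σ₂, hj₂, hσ₂, e₃, e₄⟩ := h.lap2a (p ≫ g) q hq
  obtain ⟨E, k, l, τ, hl, hτ, e₅, e₆⟩ := h.lap2a (σ₁ ≫ g) q hq
  rw [phi_eq h f p hp i₁ j₁ σ₁ hj₁ hσ₁ e₁ e₂,
    phi_eq h (p ≫ g) q hq i₂ j₂ σ₂ hj₂ hσ₂ e₃ e₄,
    phi_eq h (f ≫ g) q hq (i₁ ≫ k) l τ hl hτ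
      (by rw [t.map_comp, assoc, e₅, ← assoc, e₁]) e₆]
  have key : W'.Q.map i₂ ≫ (Localization.isoOfHom W'.Q W' j₂ hj₂).inv =
      W'.Q.map (j₁ ≫ k) ≫ (Localization.isoOfHom W'.Q W' l hl).inv :=
    h.lap2b (p ≫ g) q i₂ j₂ σ₂ (j₁ ≫ k) l τ hq hj₂ hσ₂ e₃ e₄ hl hτ
      (by rw [t.map_comp, assoc, e₅, ← assoc, e₂]) e₆
  rw [key]
  simp

/-- choice of a resolution for each object of `M` -/
noncomputable def repl (A : M) : M' := (h.lap1 A).choose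

noncomputable def rho (A : M) : t.obj (repl h A) ⟶ A := (h.lap1 A).choose_spec.choose

lemma rho_mem (A : M) : W (rho h A) := (h.lap1 A).choose_spec.choose_spec

/-- The functor `M ⥤ M'[W'⁻¹]`. -/
noncomputable def G : M ⥤ W'.Localization where
  obj A := W'.Q.obj (repl h A)
  map {A B} f := phi h (rho h A ≫ f) (rho h B) (rho_mem h B)
  map_id A := by
    exact phi_self h (rho h A ≫ 𝟙 A) (rho h A) (rho_mem h A) (by simp)
  map_comp {A B C} f g := by
    exact (phi_comp h (rho h A ≫ f) (rho h B) (rho_mem h B) g (rho h B ≫ g)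
      (rho h A ≫ f ≫ g) (rho h C) (rho_mem h C) rfl (by simp)).symm

lemma G_map {A B : M} (f : A ⟶ B) :
    (G h).map f = phi h (rho h A ≫ f) (rho h B) (rho_mem h B) := rfl

lemma G_inverts : W.IsInvertedBy (G h) := fun A B w hw => by
  have hc : W (rho h A ≫ w) := h.hWcomp _ _ (rho_mem h A) hw
  rw [G_map]
  refine ⟨⟨phi h (rho h B) (rho h A ≫ w) hc, ?_, ?_⟩⟩
  · exact (phi_comp h (rho h A ≫ w) (rho h B) (rho_mem h B) (𝟙 B) (rho h B)
      (rho h A ≫ w) (rho h A ≫ w) hc (by simp) (by simp)).trans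
      (phi_self h (rho h A ≫ w) (rho h A ≫ w) hc rfl)
  · exact (phi_comp h (rho h B) (rho h A ≫ w) hc (𝟙 B) (rho h A ≫ w)
      (rho h B) (rho h B) (rho_mem h B) (by simp) (by simp)).trans
      (phi_self h (rho h B) (rho h B) (rho_mem h B) rfl)

/-- the natural isomorphism `t ⋙ G ≅ W'.Q`. -/
noncomputable def etaApp (A' : M') :
    W'.Q.obj (repl h (t.obj A')) ≅ W'.Q.obj A' where
  hom := phi h (rho h (t.obj A')) (𝟙 (t.obj A')) (h.hWid _)
  inv := phi h (𝟙 (t.obj A')) (rho h (t.obj A')) (rho_mem h _)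
  hom_inv_id := by
    exact (phi_comp h (rho h (t.obj A')) (𝟙 (t.obj A')) (h.hWid _)
        (𝟙 (t.obj A')) (𝟙 (t.obj A')) (rho h (t.obj A')) (rho h (t.obj A'))
        (rho_mem h _) (by simp) (by simp)).trans
      (phi_self h (rho h (t.obj A')) (rho h (t.obj A')) (rho_mem h _) rfl)
  inv_hom_id := by
    exact (phi_comp h (𝟙 (t.obj A')) (rho h (t.obj A')) (rho_mem h _)
        (𝟙 (t.obj A')) (rho h (t.obj A')) (𝟙 (t.obj A')) (𝟙 (t.obj A'))
        (h.hWid _) (by simp) (by simp)).trans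
      (phi_self h (𝟙 (t.obj A')) (𝟙 (t.obj A')) (h.hWid _) rfl)

noncomputable def eta : t ⋙ G h ≅ W'.Q :=
  NatIso.ofComponents
    (fun A' => etaApp h A')
    (fun {A' B'} f => by
      dsimp [etaApp]
      rw [G_map]
      rw [← phi_Qmap h f (t.map f) (𝟙 (t.obj B')) (h.hWid _) (by simp)]
      erw [phi_comp h (rho h (t.obj A') ≫ t.map f) (rho h (t.obj B')) (rho_mem h _)
        (𝟙 (t.obj B')) (rho h (t.obj B')) (rho h (t.obj A') ≫ t.map f)
        (𝟙 (t.obj B')) (h.hWid _) (by simp) (by simp)]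
      erw [phi_comp h (rho h (t.obj A')) (𝟙 (t.obj A')) (h.hWid _)
        (t.map f) (t.map f) (rho h (t.obj A') ≫ t.map f)
        (𝟙 (t.obj B')) (h.hWid _) (by simp) rfl])

variable (hF : W'.IsInvertedBy (t ⋙ W.Q))

lemma F_phi {A' B' : M'} {B : M} (f : t.obj A' ⟶ B) (p : t.obj B' ⟶ B) (hp : W p) :
    (Localization.lift (t ⋙ W.Q) hF W'.Q).map (phi h f p hp) ≫
        ((Localization.fac (t ⋙ W.Q) hF W'.Q).app B').hom ≫ W.Q.map p =
      ((Localization.fac (t ⋙ W.Q) hF W'.Q).app A').hom ≫ W.Q.map f := by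
  set F := Localization.lift (t ⋙ W.Q) hF W'.Q
  set e := Localization.fac (t ⋙ W.Q) hF W'.Q
  obtain ⟨D, i, j, σ, hj, hσ, h1, h2⟩ := h.lap2a f p hp
  rw [phi_eq h f p hp i j σ hj hσ h1 h2, F.map_comp]
  have key : F.map ((Localization.isoOfHom W'.Q W' j hj).inv) ≫ (e.app B').hom ≫ W.Q.map p =
      (e.app D).hom ≫ W.Q.map σ := by
    rw [← cancel_epi (F.map ((Localization.isoOfHom W'.Q W' j hj).hom)),
      ← F.map_comp_assoc, Iso.hom_inv_id, F.map_id, id_comp, Localization.isoOfHom_hom]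
    have := e.hom.naturality j
    dsimp [F, e] at this ⊢
    rw [reassoc_of% this, ← W.Q.map_comp, h2]
  rw [assoc, key]
  have := e.hom.naturality i
  dsimp [F, e] at this ⊢
  rw [reassoc_of% this, ← W.Q.map_comp, h1]

/-- the natural isomorphism `G ⋙ F ≅ W.Q`. -/
noncomputable def thetaApp (A : M) :
    (Localization.lift (t ⋙ W.Q) hF W'.Q).obj (W'.Q.obj (repl h A)) ≅ W.Q.obj A :=
  ((Localization.fac (t ⋙ W.Q) hF W'.Q).app (repl h A)) ≪≫
      Localization.isoOfHom W.Q W (rho h A) (rho_mem h A)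

lemma thetaApp_hom (A : M) : (thetaApp h hF A).hom =
    ((Localization.fac (t ⋙ W.Q) hF W'.Q).app (repl h A)).hom ≫ W.Q.map (rho h A) := by
  simp [thetaApp]

noncomputable def theta : G h ⋙ Localization.lift (t ⋙ W.Q) hF W'.Q ≅ W.Q :=
  NatIso.ofComponents
    (fun A => thetaApp h hF A)
    (fun {A B} f => by
      dsimp
      rw [thetaApp_hom, thetaApp_hom, G_map]
      erw [F_phi h hF (rho h A ≫ f) (rho h B) (rho_mem h B), W.Q.map_comp, assoc]; rfl)

include h in
theorem main : (Localization.lift (t ⋙ W.Q) hF W'.Q).IsEquivalence := by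
  set F := Localization.lift (t ⋙ W.Q) hF W'.Q with hFdef
  set Gbar := Localization.lift (G h) (G_inverts h) W.Q with hGdef
  letI : Localization.Lifting W.Q W W.Q (Gbar ⋙ F) :=
    ⟨(Functor.associator W.Q Gbar F).symm ≪≫
      Functor.isoWhiskerRight (Localization.fac (G h) (G_inverts h) W.Q) F ≪≫ theta h hF⟩
  have counit : Gbar ⋙ F ≅ 𝟭 W.Localization :=
    Localization.liftNatIso W.Q W W.Q W.Q (Gbar ⋙ F) (𝟭 _) (Iso.refl _)
  letI : Localization.Lifting W'.Q W' W'.Q (F ⋙ Gbar) :=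
    ⟨(Functor.associator W'.Q F Gbar).symm ≪≫
      Functor.isoWhiskerRight (Localization.fac (t ⋙ W.Q) hF W'.Q) Gbar ≪≫
      Functor.associator t W.Q Gbar ≪≫
      Functor.isoWhiskerLeft t (Localization.fac (G h) (G_inverts h) W.Q) ≪≫ eta h⟩
  have unit : F ⋙ Gbar ≅ 𝟭 W'.Localization :=
    Localization.liftNatIso W'.Q W' W'.Q W'.Q (F ⋙ Gbar) (𝟭 _) (Iso.refl _)
  exact (CategoryTheory.Equivalence.mk F Gbar unit.symm counit).isEquivalence_functor

end ApproxProof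

/-- The Approximation Theorem: a left approximation functor `t : (M', W') → (M, W)`
between category pairs induces an equivalence of homotopy categories
`ho M' → ho M`. -/
theorem approximation_theorem
    {M' : Type u₁} [Category.{v₁} M'] {M : Type u₂} [Category.{v₂} M]
    (W' : MorphismProperty M') (W : MorphismProperty M)
    -- category pairs: the weak equivalences contain identities and are closed under
    -- composition
    (hW'id : ∀ X : M', W' (𝟙 X))
    (hW'comp : ∀ {X Y Z : M'} (f : X ⟶ Y) (g : Y ⟶ Z), W' f → W' g → W' (f ≫ g))
    (hWid : ∀ X : M, W (𝟙 X))
    (hWcomp : ∀ {X Y Z : M} (f : X ⟶ Y) (g : Y ⟶ Z), W f → W g → W (f ≫ g))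
    (t : M' ⥤ M)
    -- `t` preserves weak equivalences
    (ht : ∀ {X Y : M'} (f : X ⟶ Y), W' f → W (t.map f))
    -- LAP1
    (lap1 : ∀ A : M, ∃ (A' : M') (p : t.obj A' ⟶ A), W p)
    -- LAP2 (1)
    (lap2a : ∀ {A' B' : M'} {B : M} (f : t.obj A' ⟶ B) (p : t.obj B' ⟶ B), W p →
      ∃ (D' : M') (i' : A' ⟶ D') (j' : B' ⟶ D') (σ : t.obj D' ⟶ B),
        W' j' ∧ W σ ∧ t.map i' ≫ σ = f ∧ t.map j' ≫ σ = p)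
    -- LAP2 (2): any two such fillers agree as fractions `j'⁻¹ ∘ i'` in `ho M'`
    (lap2b : ∀ {A' B' D₁ D₂ : M'} {B : M} (f : t.obj A' ⟶ B) (p : t.obj B' ⟶ B)
      (i₁ : A' ⟶ D₁) (j₁ : B' ⟶ D₁) (σ₁ : t.obj D₁ ⟶ B)
      (i₂ : A' ⟶ D₂) (j₂ : B' ⟶ D₂) (σ₂ : t.obj D₂ ⟶ B),
      W p →
      ∀ (hj₁ : W' j₁), W σ₁ → t.map i₁ ≫ σ₁ = f → t.map j₁ ≫ σ₁ = p →
      ∀ (hj₂ : W' j₂), W σ₂ → t.map i₂ ≫ σ₂ = f → t.map j₂ ≫ σ₂ = p →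
      W'.Q.map i₁ ≫ (Localization.isoOfHom W'.Q W' j₁ hj₁).inv =
        W'.Q.map i₂ ≫ (Localization.isoOfHom W'.Q W' j₂ hj₂).inv) :
    (Localization.lift (t ⋙ W.Q)
        (fun _ _ f hf => Localization.inverts W.Q W (t.map f) (ht f hf))
        W'.Q).IsEquivalence := by
  exact ApproxProof.main
    ⟨hW'id, hWid, hWcomp, ht, lap1, @lap2a, @lap2b⟩ _
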